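/- Let G be an undirected graph on n vertices with maximum degree at most d, and let N be any integer such that N ≥ n + d + 1 and N·d is even. Then there exists a d-regular undirected graph on N vertices that contains G as a subgraph. -/

import Mathlib

open SimpleGraph

variable {M : ℕ}

/-- Add the edge `a b` to `H`. -/
private def addE (H : SimpleGraph (Fin M)) (a b : Fin M) : SimpleGraph (Fin M) where
  Adj x y := H.Adj x y ∨ (x ≠ y ∧ ((x = a ∧ y = b) ∨ (x = b ∧ y = a)))
  symm := by
    refine ⟨fun x y h => ?_⟩
    rcases h with h | ⟨hne, h⟩
    · exact Or.inl h.symm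
    · exact Or.inr ⟨hne.symm, by tauto⟩
  loopless := by
    refine ⟨fun x h => ?_⟩
    rcases h with h | ⟨hne, h⟩
    · exact H.loopless.irrefl x h
    · exact hne rfl

private lemma addE_adj {H : SimpleGraph (Fin M)} {a b x y : Fin M} :
    (addE H a b).Adj x y ↔ H.Adj x y ∨ (x ≠ y ∧ ((x = a ∧ y = b) ∨ (x = b ∧ y = a))) := Iff.rfl

private lemma addE_le {H : SimpleGraph (Fin M)} {a b x y : Fin M} (h : H.Adj x y) :
    (addE H a b).Adj x y := Or.inl h

private lemma addE_ns_a {H : SimpleGraph (Fin M)} {a b : Fin M} (hab : a ≠ b) :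
    (addE H a b).neighborSet a = insert b (H.neighborSet a) := by
  ext x
  simp only [mem_neighborSet, addE_adj, Set.mem_insert_iff]
  constructor
  · rintro (h | ⟨hne, ⟨-, rfl⟩ | ⟨rfl, rfl⟩⟩)
    · exact Or.inr h
    · exact Or.inl rfl
    · exact absurd rfl hab
  · rintro (rfl | h)
    · exact Or.inr ⟨hab, Or.inl ⟨by trivial, rfl⟩⟩
    · exact Or.inl h

private lemma addE_comm {H : SimpleGraph (Fin M)} {a b : Fin M} : addE H a b = addE H b a := by
  ext x y
  simp only [addE_adj]
  tauto

private lemma addE_ns_other {H : SimpleGraph (Fin M)} {a b y : Fin M} (hya : y ≠ a) (hyb : y ≠ b) :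
    (addE H a b).neighborSet y = H.neighborSet y := by
  ext x
  simp only [mem_neighborSet, addE_adj]
  constructor
  · rintro (h | ⟨hne, ⟨rfl, -⟩ | ⟨rfl, -⟩⟩)
    · exact h
    · exact absurd rfl hya
    · exact absurd rfl hyb
  · exact Or.inl

private lemma addE_deg_a {H : SimpleGraph (Fin M)} {a b : Fin M} (hab : a ≠ b) (hn : ¬H.Adj a b) :
    ((addE H a b).neighborSet a).ncard = (H.neighborSet a).ncard + 1 := by
  rw [addE_ns_a hab, Set.ncard_insert_of_notMem (by simpa using hn)]

private lemma addE_deg_b {H : SimpleGraph (Fin M)} {a b : Fin M} (hab : a ≠ b) (hn : ¬H.Adj a b) :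
    ((addE H a b).neighborSet b).ncard = (H.neighborSet b).ncard + 1 := by
  rw [addE_comm, addE_deg_a hab.symm (fun h => hn h.symm)]

private lemma addE_deg_other {H : SimpleGraph (Fin M)} {a b y : Fin M} (hya : y ≠ a) (hyb : y ≠ b) :
    ((addE H a b).neighborSet y).ncard = (H.neighborSet y).ncard := by
  rw [addE_ns_other hya hyb]

/-- Remove edge `a b`, add edge `u a`. -/
private def rotE (H : SimpleGraph (Fin M)) (u a b : Fin M) : SimpleGraph (Fin M) where
  Adj x y := (H.Adj x y ∧ ¬((x = a ∧ y = b) ∨ (x = b ∧ y = a))) ∨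
    (x ≠ y ∧ ((x = u ∧ y = a) ∨ (x = a ∧ y = u)))
  symm := by
    refine ⟨fun x y h => ?_⟩
    rcases h with ⟨h, h2⟩ | ⟨hne, h⟩
    · exact Or.inl ⟨h.symm, by tauto⟩
    · exact Or.inr ⟨hne.symm, by tauto⟩
  loopless := by
    refine ⟨fun x h => ?_⟩
    rcases h with ⟨h, -⟩ | ⟨hne, -⟩
    · exact H.loopless.irrefl x h
    · exact hne rfl

private lemma rotE_adj {H : SimpleGraph (Fin M)} {u a b x y : Fin M} :
    (rotE H u a b).Adj x y ↔ (H.Adj x y ∧ ¬((x = a ∧ y = b) ∨ (x = b ∧ y = a))) ∨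
      (x ≠ y ∧ ((x = u ∧ y = a) ∨ (x = a ∧ y = u))) := Iff.rfl

private lemma rotE_le {H : SimpleGraph (Fin M)} {u a b x y : Fin M} (h : H.Adj x y)
    (h2 : ¬((x = a ∧ y = b) ∨ (x = b ∧ y = a))) : (rotE H u a b).Adj x y :=
  Or.inl ⟨h, h2⟩

private lemma rotE_ns_u {H : SimpleGraph (Fin M)} {u a b : Fin M}
    (hua : u ≠ a) (hub : u ≠ b) :
    (rotE H u a b).neighborSet u = insert a (H.neighborSet u) := by
  ext x
  simp only [mem_neighborSet, rotE_adj, Set.mem_insert_iff]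
  constructor
  · rintro (⟨h, -⟩ | ⟨hne, ⟨-, rfl⟩ | ⟨rfl, rfl⟩⟩)
    · exact Or.inr h
    · exact Or.inl rfl
    · exact absurd rfl hua
  · rintro (rfl | h)
    · exact Or.inr ⟨hua, Or.inl ⟨by trivial, rfl⟩⟩
    · refine Or.inl ⟨h, ?_⟩
      rintro (⟨rfl, -⟩ | ⟨rfl, -⟩)
      · exact hua rfl
      · exact hub rfl

private lemma rotE_ns_a {H : SimpleGraph (Fin M)} {u a b : Fin M}
    (hab : a ≠ b) (hua : u ≠ a) :
    (rotE H u a b).neighborSet a = insert u ((H.neighborSet a) \ {b}) := by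
  ext x
  simp only [mem_neighborSet, rotE_adj, Set.mem_insert_iff, Set.mem_diff,
    Set.mem_singleton_iff]
  constructor
  · rintro (⟨h, h2⟩ | ⟨hne, ⟨rfl, rfl⟩ | ⟨-, rfl⟩⟩)
    · exact Or.inr ⟨h, fun hxb => h2 (Or.inl ⟨by trivial, hxb⟩)⟩
    · exact absurd rfl hua
    · exact Or.inl rfl
  · rintro (rfl | ⟨h, hxb⟩)
    · exact Or.inr ⟨fun h => hua h.symm, Or.inr ⟨by trivial, by trivial⟩⟩
    · refine Or.inl ⟨h, ?_⟩
      rintro (⟨-, h2⟩ | ⟨h2, -⟩)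
      · exact hxb h2
      · exact hab h2

private lemma rotE_ns_b {H : SimpleGraph (Fin M)} {u a b : Fin M}
    (hab : a ≠ b) (hub : u ≠ b) :
    (rotE H u a b).neighborSet b = (H.neighborSet b) \ {a} := by
  ext x
  simp only [mem_neighborSet, rotE_adj, Set.mem_diff, Set.mem_singleton_iff]
  constructor
  · rintro (⟨h, h2⟩ | ⟨hne, ⟨rfl, -⟩ | ⟨rfl, -⟩⟩)
    · exact ⟨h, fun hxa => h2 (Or.inr ⟨by trivial, hxa⟩)⟩
    · exact absurd rfl hub
    · exact absurd rfl (fun h => hab h.symm)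
  · rintro ⟨h, hxa⟩
    refine Or.inl ⟨h, ?_⟩
    rintro (⟨h2, -⟩ | ⟨-, h2⟩)
    · exact hab h2.symm
    · exact hxa h2

private lemma rotE_ns_other {H : SimpleGraph (Fin M)} {u a b y : Fin M}
    (hyu : y ≠ u) (hya : y ≠ a) (hyb : y ≠ b) :
    (rotE H u a b).neighborSet y = H.neighborSet y := by
  ext x
  simp only [mem_neighborSet, rotE_adj]
  constructor
  · rintro (⟨h, -⟩ | ⟨-, ⟨rfl, -⟩ | ⟨rfl, -⟩⟩)
    · exact h
    · exact absurd rfl hyu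
    · exact absurd rfl hya
  · intro h
    refine Or.inl ⟨h, ?_⟩
    rintro (⟨h2, -⟩ | ⟨h2, -⟩)
    · exact hya h2
    · exact hyb h2

private lemma rotE_deg_u {H : SimpleGraph (Fin M)} {u a b : Fin M}
    (hua : u ≠ a) (hub : u ≠ b) (hnadj : ¬H.Adj u a) :
    ((rotE H u a b).neighborSet u).ncard = (H.neighborSet u).ncard + 1 := by
  rw [rotE_ns_u hua hub, Set.ncard_insert_of_notMem (by simpa using hnadj)]

private lemma rotE_deg_a {H : SimpleGraph (Fin M)} {u a b : Fin M}
    (hua : u ≠ a) (hub : u ≠ b) (hadj : H.Adj a b) (hnadj : ¬H.Adj u a) :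
    ((rotE H u a b).neighborSet a).ncard = (H.neighborSet a).ncard := by
  have hab : a ≠ b := hadj.ne
  have hb : b ∈ H.neighborSet a := hadj
  have h1 : 0 < (H.neighborSet a).ncard := (Set.ncard_pos (Set.toFinite _)).2 ⟨b, hb⟩
  rw [rotE_ns_a hab hua, Set.ncard_insert_of_notMem
    (by simp only [Set.mem_diff, Set.mem_singleton_iff, mem_neighborSet, not_and]
        intro h; exact absurd h.symm hnadj),
    Set.ncard_diff_singleton_of_mem hb]
  omega

private lemma rotE_deg_b {H : SimpleGraph (Fin M)} {u a b : Fin M}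
    (hub : u ≠ b) (hadj : H.Adj a b) :
    ((rotE H u a b).neighborSet b).ncard = (H.neighborSet b).ncard - 1 := by
  rw [rotE_ns_b hadj.ne hub, Set.ncard_diff_singleton_of_mem (by simpa using hadj.symm)]

private lemma rotE_deg_other {H : SimpleGraph (Fin M)} {u a b y : Fin M}
    (hyu : y ≠ u) (hya : y ≠ a) (hyb : y ≠ b) :
    ((rotE H u a b).neighborSet y).ncard = (H.neighborSet y).ncard := by
  rw [rotE_ns_other hyu hya hyb]

private lemma sum_shift2 (g h : Fin M → ℕ) (p q : Fin M) (hpq : p ≠ q)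
    (hp : h p = g p + 1) (hq : h q = g q + 1) (ho : ∀ y, y ≠ p → y ≠ q → h y = g y) :
    ∑ y, h y = ∑ y, g y + 2 := by
  have key : ∀ y, h y = g y + ((if y = p then 1 else 0) + (if y = q then 1 else 0)) := by
    intro y
    by_cases h1 : y = p
    · subst h1; simp [hp, hpq]
    · by_cases h2 : y = q
      · subst h2; simp [hq, h1]
      · simp [ho y h1 h2, h1, h2]
  rw [Finset.sum_congr rfl (fun y _ => key y), Finset.sum_add_distrib, Finset.sum_add_distrib,
    Finset.sum_ite_eq', Finset.sum_ite_eq']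
  simp

private lemma sum_shift1 (g h : Fin M → ℕ) (p : Fin M)
    (hp : h p = g p + 2) (ho : ∀ y, y ≠ p → h y = g y) :
    ∑ y, h y = ∑ y, g y + 2 := by
  have key : ∀ y, h y = g y + (if y = p then 2 else 0) := by
    intro y
    by_cases h1 : y = p
    · subst h1; simp [hp]
    · simp [ho y h1, h1]
  rw [Finset.sum_congr rfl (fun y _ => key y), Finset.sum_add_distrib, Finset.sum_ite_eq']
  simp

private lemma even_sum_deg (H : SimpleGraph (Fin M)) :
    Even (∑ v, (H.neighborSet v).ncard) := by
  classical
  have hconv : ∀ v, (H.neighborSet v).ncard = H.degree v := by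
    intro v
    rw [← SimpleGraph.card_neighborSet_eq_degree, Set.ncard_eq_toFinset_card',
      Set.toFinset_card]
  rw [Finset.sum_congr rfl (fun v _ => hconv v), SimpleGraph.sum_degrees_eq_twice_card_edges]
  exact even_two_mul _

private lemma grow {V : Type} [Fintype V] (G : SimpleGraph V) (d N : ℕ) (f : V → Fin N)
    (hf : Function.Injective f) (hN : Fintype.card V + d + 1 ≤ N) (heven : Even (N * d)) :
    ∀ (k : ℕ) (H : SimpleGraph (Fin N)),
      (∀ u v, G.Adj u v → H.Adj (f u) (f v)) →
      (∀ v, (H.neighborSet v).ncard ≤ d) →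
      N * d - ∑ v, (H.neighborSet v).ncard ≤ k →
      ∃ H' : SimpleGraph (Fin N), (∀ v, (H'.neighborSet v).ncard = d) ∧
        ∀ u v, G.Adj u v → H'.Adj (f u) (f v) := by
  intro k
  induction k with
  | zero =>
    intro H hhom hdeg hk
    by_cases hall : ∀ v, (H.neighborSet v).ncard = d
    · exact ⟨H, hall, hhom⟩
    · exfalso
      push_neg at hall
      obtain ⟨u, hu⟩ := hall
      have hu' : (H.neighborSet u).ncard < d := lt_of_le_of_ne (hdeg u) hu
      have hsum : ∑ v, (H.neighborSet v).ncard < ∑ _v : Fin N, d :=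
        Finset.sum_lt_sum (fun i _ => hdeg i) ⟨u, Finset.mem_univ u, hu'⟩
      have hconst : ∑ _v : Fin N, d = N * d := by
        simp [Finset.sum_const, Finset.card_univ, mul_comm]
      rw [hconst] at hsum
      omega
  | succ k ih =>
    intro H hhom hdeg hk
    by_cases hall : ∀ v, (H.neighborSet v).ncard = d
    · exact ⟨H, hall, hhom⟩
    push_neg at hall
    obtain ⟨u, hune⟩ := hall
    have hu : (H.neighborSet u).ncard < d := lt_of_le_of_ne (hdeg u) hune
    have hd1 : 1 ≤ d := by omega
    -- the common finishing step
    have step : ∀ H₂ : SimpleGraph (Fin N),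
        (∀ u' v', G.Adj u' v' → H₂.Adj (f u') (f v')) →
        (∀ v, (H₂.neighborSet v).ncard ≤ d) →
        (∑ v, (H₂.neighborSet v).ncard = ∑ v, (H.neighborSet v).ncard + 2) →
        ∃ H' : SimpleGraph (Fin N), (∀ v, (H'.neighborSet v).ncard = d) ∧
          ∀ u' v', G.Adj u' v' → H'.Adj (f u') (f v') := by
      intro H₂ h1 h2 h3
      refine ih H₂ h1 h2 ?_
      set Q := N * d with hQ
      omega
    -- find a fresh vertex w
    obtain ⟨w, hw⟩ : ∃ w, w ∉ Set.range f ∪ (H.neighborSet u ∪ {u}) := by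
      by_contra hcon
      push_neg at hcon
      have hAuniv := Set.eq_univ_of_forall hcon
      have hA1 : (Set.range f ∪ (H.neighborSet u ∪ {u})).ncard ≤
          Fintype.card V + ((d - 1) + 1) := by
        refine le_trans (Set.ncard_union_le _ _) (Nat.add_le_add ?_
          (le_trans (Set.ncard_union_le _ _) (Nat.add_le_add ?_ ?_)))
        · rw [← Set.image_univ, Set.ncard_image_of_injective _ hf, Set.ncard_univ,
            Nat.card_eq_fintype_card]
        · omega
        · simp [Set.ncard_singleton]
      rw [hAuniv, Set.ncard_univ, Nat.card_eq_fintype_card, Fintype.card_fin] at hA1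
      omega
    have hwf : w ∉ Set.range f := fun h => hw (Or.inl h)
    have hwadj : ¬H.Adj u w := fun h => hw (Or.inr (Or.inl h))
    have hwu : w ≠ u := fun h => hw (Or.inr (Or.inr h))
    by_cases hwdeg : (H.neighborSet w).ncard < d
    · -- add the edge u w
      refine step (addE H u w) (fun a b h => addE_le (hhom a b h)) ?_ ?_
      · intro v
        by_cases h1 : v = u
        · subst h1; rw [addE_deg_a hwu.symm hwadj]; omega
        by_cases h2 : v = w
        · subst h2; rw [addE_deg_b hwu.symm hwadj]; omega
        · rw [addE_deg_other h1 h2]; exact hdeg v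
      · exact sum_shift2 _ _ u w hwu.symm (addE_deg_a hwu.symm hwadj)
          (addE_deg_b hwu.symm hwadj) (fun y hy1 hy2 => addE_deg_other hy1 hy2)
    have hwdeg' : (H.neighborSet w).ncard = d := le_antisymm (hdeg w) (by omega)
    by_cases hv : ∃ v, v ≠ u ∧ (H.neighborSet v).ncard < d
    · obtain ⟨v, hvu, hvdeg⟩ := hv
      by_cases hadj : H.Adj u v
      · -- 4-vertex rotation: remove x-w, add v-x, add u-w
        have hvw : v ≠ w := by intro h; rw [h, hwdeg'] at hvdeg; omega
        have huw : u ∉ H.neighborSet w := fun h => hwadj h.symm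
        obtain ⟨x, hx1, hx2⟩ :
            (H.neighborSet w \ insert v (H.neighborSet v)).Nonempty := by
          refine Set.nonempty_of_ncard_ne_zero ?_
          have hsub : H.neighborSet w ⊆
              (H.neighborSet w \ insert v (H.neighborSet v)) ∪
                (insert v (H.neighborSet v) \ {u}) := by
            intro x hx
            by_cases hxB : x ∈ insert v (H.neighborSet v)
            · exact Or.inr ⟨hxB, fun hxu => huw (hxu ▸ hx)⟩
            · exact Or.inl ⟨hx, hxB⟩
          have huB : u ∈ insert v (H.neighborSet v) := Or.inr hadj.symm
          have hc1 : (insert v (H.neighborSet v) \ {u}).ncard ≤ d - 1 := by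
            rw [Set.ncard_diff_singleton_of_mem huB]
            have := Set.ncard_insert_le v (H.neighborSet v)
            omega
          have hc2 : d ≤ (H.neighborSet w \ insert v (H.neighborSet v)).ncard +
              (insert v (H.neighborSet v) \ {u}).ncard := by
            rw [← hwdeg']
            exact le_trans (Set.ncard_le_ncard hsub (Set.toFinite _))
              (Set.ncard_union_le _ _)
          omega
        have hxw : H.Adj w x := hx1
        have hxv : ¬H.Adj v x := fun h => hx2 (Or.inr h)
        have hxvne : x ≠ v := fun h => hx2 (Or.inl h)
        have hxu : x ≠ u := fun h => huw (h ▸ hx1)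
        -- H₁ removes x-w and adds v-x ; H₂ adds u-w
        have h21 : ¬(rotE H v x w).Adj u w := by
          rintro (⟨h, -⟩ | ⟨-, ⟨h1, -⟩ | ⟨h1, -⟩⟩)
          · exact hwadj h
          · exact hvu h1.symm
          · exact hxu h1.symm
        have h22 : u ≠ w := hwu.symm
        have degu : (((addE (rotE H v x w) u w)).neighborSet u).ncard =
            (H.neighborSet u).ncard + 1 := by
          rw [addE_deg_a h22 h21, rotE_deg_other hvu.symm hxu.symm h22]
        have degw : (((addE (rotE H v x w) u w)).neighborSet w).ncard =
            (H.neighborSet w).ncard := by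
          rw [addE_deg_b h22 h21, rotE_deg_b hvw hxw.symm, hwdeg']
          omega
        have degv : (((addE (rotE H v x w) u w)).neighborSet v).ncard =
            (H.neighborSet v).ncard + 1 := by
          rw [addE_deg_other hvu hvw, rotE_deg_u hxvne.symm hvw hxv]
        have degx : (((addE (rotE H v x w) u w)).neighborSet x).ncard =
            (H.neighborSet x).ncard := by
          rw [addE_deg_other hxu hxw.ne', rotE_deg_a hxvne.symm hvw hxw.symm hxv]
        have degother : ∀ y, y ≠ u → y ≠ w → y ≠ v → y ≠ x →
            (((addE (rotE H v x w) u w)).neighborSet y).ncard =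
              (H.neighborSet y).ncard := by
          intro y h1 h2 h3 h4
          rw [addE_deg_other h1 h2, rotE_deg_other h3 h4 h2]
        refine step (addE (rotE H v x w) u w) ?_ ?_ ?_
        · intro a b h
          refine addE_le (rotE_le (hhom a b h) ?_)
          rintro (⟨-, h2⟩ | ⟨h2, -⟩)
          · exact hwf ⟨b, h2⟩
          · exact hwf ⟨a, h2⟩
        · intro y
          by_cases h1 : y = u
          · subst h1; omega
          by_cases h2 : y = w
          · subst h2; rw [degw, hwdeg']
          by_cases h3 : y = v
          · subst h3; omega
          by_cases h4 : y = x
          · rw [h4, degx]; exact hdeg x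
          · rw [degother y h1 h2 h3 h4]; exact hdeg y
        · refine sum_shift2 _ _ u v hvu.symm degu degv ?_
          intro y hy1 hy2
          by_cases h2 : y = w
          · subst h2; exact degw
          by_cases h4 : y = x
          · subst h4; exact degx
          · exact degother y hy1 h2 hy2 h4
      · -- add the edge u v
        refine step (addE H u v) (fun a b h => addE_le (hhom a b h)) ?_ ?_
        · intro y
          by_cases h1 : y = u
          · subst h1; rw [addE_deg_a hvu.symm hadj]; omega
          by_cases h2 : y = v
          · subst h2; rw [addE_deg_b hvu.symm hadj]; omega
          · rw [addE_deg_other h1 h2]; exact hdeg y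
        · exact sum_shift2 _ _ u v hvu.symm (addE_deg_a hvu.symm hadj)
            (addE_deg_b hvu.symm hadj) (fun y hy1 hy2 => addE_deg_other hy1 hy2)
    · -- u is the only deficient vertex; its deficiency is even, so at least 2
      push_neg at hv
      have hall' : ∀ y, y ≠ u → (H.neighborSet y).ncard = d :=
        fun y hy => le_antisymm (hdeg y) (by have := hv y hy; omega)
      have hu2 : (H.neighborSet u).ncard + 2 ≤ d := by
        have hsum1 : (H.neighborSet u).ncard +
            ∑ y ∈ Finset.univ.erase u, (H.neighborSet y).ncard =
            ∑ y, (H.neighborSet y).ncard :=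
          Finset.add_sum_erase _ (fun y => (H.neighborSet y).ncard) (Finset.mem_univ u)
        have hsum2 : ∑ y ∈ Finset.univ.erase u, (H.neighborSet y).ncard =
            (N - 1) * d := by
          rw [Finset.sum_congr rfl (fun y hy => hall' y (Finset.ne_of_mem_erase hy)),
            Finset.sum_const, Finset.card_erase_of_mem (Finset.mem_univ u),
            Finset.card_univ, Fintype.card_fin, smul_eq_mul]
        have hNd : (N - 1) * d + d = N * d := by
          rw [Nat.sub_one_mul]
          have : d ≤ N * d := Nat.le_mul_of_pos_left d (by omega)
          omega
        obtain ⟨s, hs⟩ := even_sum_deg H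
        obtain ⟨t, ht⟩ := heven
        set Q := N * d with hQ
        set R := (N - 1) * d with hR
        omega
      obtain ⟨x, hx1, hx2⟩ :
          (H.neighborSet w \ insert u (H.neighborSet u)).Nonempty := by
        refine Set.nonempty_of_ncard_ne_zero ?_
        have hsub : H.neighborSet w ⊆
            (H.neighborSet w \ insert u (H.neighborSet u)) ∪
              insert u (H.neighborSet u) := fun x hx => by
          by_cases hxB : x ∈ insert u (H.neighborSet u)
          · exact Or.inr hxB
          · exact Or.inl ⟨hx, hxB⟩
        have hc1 : (insert u (H.neighborSet u)).ncard ≤ d - 1 := by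
          have := Set.ncard_insert_le u (H.neighborSet u)
          omega
        have hc2 : d ≤ (H.neighborSet w \ insert u (H.neighborSet u)).ncard +
            (insert u (H.neighborSet u)).ncard := by
          rw [← hwdeg']
          exact le_trans (Set.ncard_le_ncard hsub (Set.toFinite _))
            (Set.ncard_union_le _ _)
        omega
      have hxw : H.Adj w x := hx1
      have hxu : x ≠ u := fun h => hx2 (Or.inl h)
      have hxadj : ¬H.Adj u x := fun h => hx2 (Or.inr h)
      -- H₁ removes w-x and adds u-w ; H₂ adds u-x
      have h21 : ¬(rotE H u w x).Adj u x := by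
        rintro (⟨h, -⟩ | ⟨-, ⟨-, h1⟩ | ⟨h1, -⟩⟩)
        · exact hxadj h
        · exact hxw.ne' h1
        · exact hwu h1.symm
      have h22 : u ≠ x := hxu.symm
      have degu : ((addE (rotE H u w x) u x).neighborSet u).ncard =
          (H.neighborSet u).ncard + 2 := by
        rw [addE_deg_a h22 h21, rotE_deg_u hwu.symm h22 hwadj]
      have degx : ((addE (rotE H u w x) u x).neighborSet x).ncard =
          (H.neighborSet x).ncard := by
        have hx0 : 1 ≤ (H.neighborSet x).ncard :=
          (Set.ncard_pos (Set.toFinite _)).2 ⟨w, hxw.symm⟩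
        rw [addE_deg_b h22 h21, rotE_deg_b h22 hxw]
        omega
      have degw : ((addE (rotE H u w x) u x).neighborSet w).ncard =
          (H.neighborSet w).ncard := by
        rw [addE_deg_other hwu hxw.ne, rotE_deg_a hwu.symm h22 hxw hwadj]
      have degother : ∀ y, y ≠ u → y ≠ x → y ≠ w →
          ((addE (rotE H u w x) u x).neighborSet y).ncard =
            (H.neighborSet y).ncard := by
        intro y h1 h2 h3
        rw [addE_deg_other h1 h2, rotE_deg_other h1 h3 h2]
      refine step (addE (rotE H u w x) u x) ?_ ?_ ?_
      · intro a b h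
        refine addE_le (rotE_le (hhom a b h) ?_)
        rintro (⟨h2, -⟩ | ⟨-, h2⟩)
        · exact hwf ⟨a, h2⟩
        · exact hwf ⟨b, h2⟩
      · intro y
        by_cases h1 : y = u
        · subst h1; omega
        by_cases h2 : y = x
        · rw [h2, degx]; exact hdeg x
        by_cases h3 : y = w
        · rw [h3, degw]; exact hdeg w
        · rw [degother y h1 h2 h3]; exact hdeg y
      · refine sum_shift1 _ _ u degu ?_
        intro y hy1
        by_cases h2 : y = x
        · subst h2; exact degx
        by_cases h3 : y = w
        · subst h3; exact degw
        · exact degother y hy1 h2 h3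

/-- Every graph `G` on `n` vertices with maximum degree at most `d` is a subgraph of
some `d`-regular graph on `N` vertices, for any `N ≥ n + d + 1` with `N·d` even. -/
theorem exists_regular_supergraph {V : Type} [Fintype V]
    (G : SimpleGraph V) (n d N : ℕ) (hn : Fintype.card V = n)
    (hd : ∀ v : V, (G.neighborSet v).ncard ≤ d)
    (hN : n + d + 1 ≤ N) (heven : Even (N * d)) :
    ∃ H : SimpleGraph (Fin N),
      (∀ v : Fin N, (H.neighborSet v).ncard = d) ∧
      ∃ f : V → Fin N, Function.Injective f ∧
        ∀ u v : V, G.Adj u v → H.Adj (f u) (f v) := by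
  have hcard : Fintype.card V ≤ Fintype.card (Fin N) := by
    rw [Fintype.card_fin]; omega
  obtain ⟨e⟩ := Function.Embedding.nonempty_of_card_le hcard
  have hhom : ∀ u v, G.Adj u v → (G.map e).Adj (e u) (e v) :=
    fun u v h => SimpleGraph.map_adj e G (e u) (e v) |>.mpr ⟨u, v, h, rfl, rfl⟩
  have hdeg : ∀ y, ((G.map e).neighborSet y).ncard ≤ d := by
    intro y
    by_cases hy : ∃ u0, e u0 = y
    · obtain ⟨u0, rfl⟩ := hy
      have hns : (G.map e).neighborSet (e u0) = e '' G.neighborSet u0 := by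
        ext x
        simp only [SimpleGraph.mem_neighborSet, SimpleGraph.map_adj, Set.mem_image]
        constructor
        · rintro ⟨a, b, hab, ha, rfl⟩
          exact ⟨b, by rwa [e.injective ha] at hab, rfl⟩
        · rintro ⟨b, hb, rfl⟩
          exact ⟨u0, b, hb, rfl, rfl⟩
      rw [hns, Set.ncard_image_of_injective _ e.injective]
      exact hd u0
    · have hns : (G.map e).neighborSet y = ∅ := by
        ext x
        simp only [SimpleGraph.mem_neighborSet, SimpleGraph.map_adj,
          Set.mem_empty_iff_false, iff_false]
        rintro ⟨a, b, hab, ha, rfl⟩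
        exact hy ⟨a, ha⟩
      rw [hns]
      simp
  obtain ⟨H, h1, h2⟩ := grow G d N e e.injective (by omega) heven
    (N * d) (G.map e) hhom hdeg (Nat.sub_le _ _)
  exact ⟨H, h1, e, e.injective, h2⟩
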